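/- (Motion Lemma) Let a finite group A act faithfully on a finite set Ω. If every non-identity element of A moves more than 2·log₂|A| points of Ω, then the action has distinguishing number 2; i.e., there is a 2-coloring of Ω preserved by no non-identity element of A. -/

import Mathlib

open MulAction Subgroup

section Aux

variable {A Ω : Type*} [Group A] [Fintype Ω] [MulAction A Ω]

/-- The subgroup of elements preserving a coloring. -/
def invSubgroup (c : Ω → Fin 2) : Subgroup A where
  carrier := {a | ∀ x, c (a • x) = c x}
  one_mem' := by intro x; simp
  mul_mem' := by intro a b ha hb x; rw [mul_smul, ha, hb]
  inv_mem' := by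
    intro a ha x
    have := ha (a⁻¹ • x)
    rw [smul_inv_smul] at this
    exact this.symm

omit [Fintype Ω] in
lemma fixOrbit {a : A} {x : Ω} (hx : a • x = x) :
    orbit (zpowers a) x = {x} := by
  have hle : zpowers a ≤ stabilizer A x := zpowers_le.mpr (mem_stabilizer_iff.mpr hx)
  ext y
  constructor
  · rintro ⟨g, rfl⟩
    exact hle g.2
  · rintro rfl
    exact mem_orbit_self _

/-- invariant colorings correspond to colorings of the orbit quotient. -/
noncomputable def invEquiv (a : A) :
    {c : Ω → Fin 2 // ∀ x, c (a • x) = c x} ≃ (orbitRel.Quotient (zpowers a) Ω → Fin 2) where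
  toFun c := fun q => Quotient.liftOn' q c.1 (by
    intro x y hxy
    obtain ⟨g, rfl⟩ := hxy
    have hle : zpowers a ≤ invSubgroup (A := A) c.1 := zpowers_le.mpr c.2
    exact hle g.2 y)
  invFun f := ⟨fun x => f (Quotient.mk'' x), fun x => by
    have : (Quotient.mk'' (a • x) : orbitRel.Quotient (zpowers a) Ω) = Quotient.mk'' x := by
      exact Quotient.sound' ⟨⟨a, mem_zpowers a⟩, rfl⟩
    exact congrArg f this⟩
  left_inv c := by ext x; rfl
  right_inv f := by
    funext q
    induction q using Quotient.inductionOn'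
    rfl

/-- fixed points correspond to singleton orbits. -/
noncomputable def fixEquiv (a : A) :
    {x : Ω // a • x = x} ≃
      {q : orbitRel.Quotient (zpowers a) Ω // Nat.card q.orbit = 1} where
  toFun x := ⟨Quotient.mk'' x.1, by
    rw [orbitRel.Quotient.orbit_mk, fixOrbit x.2, Nat.card_coe_set_eq, Set.ncard_singleton]⟩
  invFun q := ⟨q.1.out, by
    have horb : q.1.orbit = orbit (zpowers a) q.1.out :=
      orbitRel.Quotient.orbit_eq_orbit_out _ Quotient.out_eq'
    have h1 : (q.1.out : Ω) ∈ q.1.orbit := by rw [horb]; exact mem_orbit_self _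
    have h2 : a • q.1.out ∈ q.1.orbit := by
      rw [horb]; exact ⟨⟨a, mem_zpowers a⟩, rfl⟩
    have hsub : Subsingleton q.1.orbit := (Nat.card_eq_one_iff_unique.mp q.2).1
    have := hsub.elim ⟨_, h2⟩ ⟨_, h1⟩
    exact Subtype.ext_iff.mp this⟩
  left_inv x := by
    apply Subtype.ext
    have hmem : (Quotient.mk'' x.1 : orbitRel.Quotient (zpowers a) Ω).out
        ∈ orbit (zpowers a) x.1 := by
      rw [← orbitRel.Quotient.orbit_mk (G := zpowers a) x.1]
      rw [orbitRel.Quotient.mem_orbit]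
      exact Quotient.out_eq' _
    rw [fixOrbit x.2] at hmem
    exact hmem
  right_inv q := Subtype.ext (Quotient.out_eq' _)

lemma card_omega_eq (a : A) [Fintype (orbitRel.Quotient (zpowers a) Ω)] :
    Fintype.card Ω = ∑ q : orbitRel.Quotient (zpowers a) Ω, Nat.card q.orbit := by
  letI : ∀ q : orbitRel.Quotient (zpowers a) Ω, Fintype q.orbit :=
    fun q => Fintype.ofFinite _
  rw [← Nat.card_eq_fintype_card, Nat.card_congr (selfEquivSigmaOrbits' (zpowers a) Ω),
    Nat.card_eq_fintype_card, Fintype.card_sigma]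
  exact Finset.sum_congr rfl fun q _ => (Nat.card_eq_fintype_card).symm

end Aux

section Aux2
variable {A Ω : Type*} [Group A] [Fintype Ω] [MulAction A Ω]


lemma motion_bound (a : A) :
    {x : Ω | a • x ≠ x}.ncard + 2 * Nat.card (orbitRel.Quotient (zpowers a) Ω)
      ≤ 2 * Fintype.card Ω := by
  classical
  letI : Fintype (orbitRel.Quotient (zpowers a) Ω) := Fintype.ofFinite _
  set Q := orbitRel.Quotient (zpowers a) Ω with hQ
  have hfix : Nat.card {x : Ω // a • x = x} = Nat.card {q : Q // Nat.card q.orbit = 1} :=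
    Nat.card_congr (fixEquiv a)
  have hm : {x : Ω | a • x ≠ x}.ncard + Nat.card {x : Ω // a • x = x} = Fintype.card Ω := by
    have h1 : Nat.card {x : Ω // a • x = x} = ({x : Ω | a • x ≠ x}ᶜ).ncard := by
      rw [← Nat.card_coe_set_eq]
      congr 1
      simp [Set.compl_setOf]
      rfl
    rw [h1, Set.ncard_add_ncard_compl, Nat.card_eq_fintype_card]
  have hsum : Fintype.card Ω = ∑ q : Q, Nat.card q.orbit := card_omega_eq a
  have hq1 : Nat.card {q : Q // Nat.card q.orbit = 1}
      = ∑ q : Q, if Nat.card q.orbit = 1 then 1 else 0 := by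
    rw [Nat.card_eq_fintype_card, Fintype.card_subtype, Finset.card_filter]
  have hterm : ∀ q : Q, 2 ≤ Nat.card q.orbit + (if Nat.card q.orbit = 1 then 1 else 0) := by
    intro q
    haveI : Nonempty q.orbit := (orbitRel.Quotient.nonempty_orbit q).to_subtype
    have hpos : 0 < Nat.card q.orbit := Nat.card_pos
    by_cases hone : Nat.card q.orbit = 1
    · rw [if_pos hone, hone]
    · rw [if_neg hone]
      omega
  have hkey : 2 * Nat.card Q ≤ Fintype.card Ω + Nat.card {x : Ω // a • x = x} := by
    rw [hfix, hq1, hsum, ← Finset.sum_add_distrib]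
    calc 2 * Nat.card Q = ∑ _q : Q, 2 := by
          simp [Finset.sum_const, Nat.card_eq_fintype_card, mul_comm]
      _ ≤ _ := Finset.sum_le_sum fun q _ => hterm q
  omega

lemma key_count (a : A) :
    Nat.card {c : Ω → Fin 2 // ∀ x, c (a • x) = c x} ^ 2 * 2 ^ ({x : Ω | a • x ≠ x}.ncard)
      ≤ 2 ^ (2 * Fintype.card Ω) := by
  have h1 : Nat.card {c : Ω → Fin 2 // ∀ x, c (a • x) = c x}
      = 2 ^ Nat.card (orbitRel.Quotient (zpowers a) Ω) := by
    rw [Nat.card_congr (invEquiv a), Nat.card_fun]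
    simp
  rw [h1, ← pow_mul, ← pow_add]
  refine Nat.pow_le_pow_right (by norm_num) ?_
  have hb := motion_bound (A := A) (Ω := Ω) a
  clear h1
  omega

end Aux2

/-- Motion Lemma: if a finite group `A` acts faithfully on a finite
set `Ω` and every non-identity element moves more than `2 log₂ |A|` points, then
there is a 2-coloring of `Ω` preserved by no non-identity element of `A`. -/
theorem motion_lemma {A Ω : Type*} [Group A] [Fintype A] [Fintype Ω]
    [MulAction A Ω] [FaithfulSMul A Ω]
    (h : ∀ a : A, a ≠ 1 →
      2 * Real.logb 2 (Fintype.card A) < ({x : Ω | a • x ≠ x}.ncard : ℝ)) :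
    ∃ c : Ω → Fin 2, ∀ a : A, (∀ x, c (a • x) = c x) → a = 1 := by
  classical
  rcases subsingleton_or_nontrivial A with hA | hA
  · exact ⟨fun _ => 0, fun a _ => Subsingleton.elim a 1⟩
  have hK2 : 2 ≤ Fintype.card A := Fintype.one_lt_card
  have key : ∀ a : A, a ≠ 1 →
      Fintype.card A * Nat.card {c : Ω → Fin 2 // ∀ x, c (a • x) = c x}
        < 2 ^ Fintype.card Ω := by
    intro a ha
    set N := Nat.card {c : Ω → Fin 2 // ∀ x, c (a • x) = c x} with hN
    set m := {x : Ω | a • x ≠ x}.ncard with hmdef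
    have hm := h a ha
    have hA2 : (Fintype.card A : ℕ) ^ 2 < 2 ^ m := by
      have h0 : (0 : ℝ) < (Fintype.card A : ℝ) := by
        exact_mod_cast Fintype.card_pos
      have e1 : ((Fintype.card A : ℝ)) ^ (2 : ℕ)
          = (2 : ℝ) ^ (2 * Real.logb 2 (Fintype.card A)) := by
        rw [mul_comm, Real.rpow_mul (by norm_num), Real.rpow_logb (by norm_num) (by norm_num) h0]
        rw [← Real.rpow_natCast ((Fintype.card A : ℝ)) 2]
        norm_num
      have e2 : (2 : ℝ) ^ (2 * Real.logb 2 (Fintype.card A)) < (2 : ℝ) ^ (m : ℝ) :=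
        Real.rpow_lt_rpow_left_iff (by norm_num) |>.mpr hm
      have e3 : ((Fintype.card A : ℝ)) ^ (2 : ℕ) < ((2 : ℕ) : ℝ) ^ (m : ℕ) := by
        rw [e1]
        calc (2 : ℝ) ^ (2 * Real.logb 2 (Fintype.card A)) < (2 : ℝ) ^ (m : ℝ) := e2
          _ = ((2 : ℕ) : ℝ) ^ (m : ℕ) := by
              rw [Real.rpow_natCast]; norm_num
      exact_mod_cast e3
    have hk : N ^ 2 * 2 ^ m ≤ 2 ^ (2 * Fintype.card Ω) := key_count (A := A) (Ω := Ω) a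
    by_contra hcon
    push_neg at hcon
    have hsq : (2 ^ Fintype.card Ω) ^ 2 ≤ (Fintype.card A * N) ^ 2 :=
      Nat.pow_le_pow_left hcon 2
    have hNpos : 0 < N := by
      rw [hN]
      have : Nonempty {c : Ω → Fin 2 // ∀ x, c (a • x) = c x} :=
        ⟨⟨fun _ => 0, fun _ => rfl⟩⟩
      exact Nat.card_pos
    have hlt : (Fintype.card A * N) ^ 2 < (2 ^ Fintype.card Ω) ^ 2 := by
      calc (Fintype.card A * N) ^ 2 = (Fintype.card A) ^ 2 * N ^ 2 := by ring
        _ < 2 ^ m * N ^ 2 := by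
            have hN2 : 0 < N ^ 2 := by positivity
            exact (Nat.mul_lt_mul_right hN2).mpr hA2
        _ = N ^ 2 * 2 ^ m := by ring
        _ ≤ 2 ^ (2 * Fintype.card Ω) := hk
        _ = (2 ^ Fintype.card Ω) ^ 2 := by rw [← pow_mul, mul_comm]
    exact absurd hlt (not_lt.mpr hsq)
  -- counting argument
  by_contra hc
  push_neg at hc
  obtain ⟨f, hf⟩ : ∃ f : (Ω → Fin 2) → A,
      ∀ c, f c ≠ 1 ∧ ∀ x, c (f c • x) = c x := by
    choose f h1 h2 using hc
    exact ⟨f, fun c => ⟨h2 c, h1 c⟩⟩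
  have hT1 : 1 ≤ 2 ^ Fintype.card Ω := Nat.one_le_two_pow
  set K := Fintype.card A with hKdef
  set Bad : A → Finset (Ω → Fin 2) :=
    fun a => Finset.univ.filter (fun c => ∀ x, c (a • x) = c x) with hBadDef
  have hcover : (Finset.univ : Finset (Ω → Fin 2))
      ⊆ (Finset.univ.erase (1 : A)).biUnion Bad := by
    intro c _
    rw [Finset.mem_biUnion]
    exact ⟨f c, Finset.mem_erase.mpr ⟨(hf c).1, Finset.mem_univ _⟩,
      Finset.mem_filter.mpr ⟨Finset.mem_univ _, (hf c).2⟩⟩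
  have hTS : 2 ^ Fintype.card Ω ≤ ∑ a ∈ Finset.univ.erase (1 : A), (Bad a).card := by
    calc 2 ^ Fintype.card Ω = (Finset.univ : Finset (Ω → Fin 2)).card := by
          simp [Finset.card_univ]
      _ ≤ ((Finset.univ.erase (1 : A)).biUnion Bad).card := Finset.card_le_card hcover
      _ ≤ _ := Finset.card_biUnion_le
  have hBadCard : ∀ a ∈ Finset.univ.erase (1 : A),
      K * (Bad a).card ≤ 2 ^ Fintype.card Ω - 1 := by
    intro a ha
    have ha1 : a ≠ 1 := (Finset.mem_erase.mp ha).1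
    have hcard : (Bad a).card = Nat.card {c : Ω → Fin 2 // ∀ x, c (a • x) = c x} := by
      rw [Nat.card_eq_fintype_card, Fintype.card_subtype]
    rw [hcard]
    exact Nat.le_sub_one_of_lt (key a ha1)
  have hKS : K * (∑ a ∈ Finset.univ.erase (1 : A), (Bad a).card)
      ≤ (K - 1) * (2 ^ Fintype.card Ω - 1) := by
    rw [Finset.mul_sum]
    calc ∑ a ∈ Finset.univ.erase (1 : A), K * (Bad a).card
        ≤ ∑ _a ∈ Finset.univ.erase (1 : A), (2 ^ Fintype.card Ω - 1) :=
          Finset.sum_le_sum hBadCard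
      _ = (K - 1) * (2 ^ Fintype.card Ω - 1) := by
          rw [Finset.sum_const, smul_eq_mul, Finset.card_erase_of_mem (Finset.mem_univ _),
            Finset.card_univ]
  have h5 : K * 2 ^ Fintype.card Ω
      ≤ (K - 1) * (2 ^ Fintype.card Ω - 1) :=
    le_trans (Nat.mul_le_mul_left K hTS) hKS
  have h6 : (K - 1) * (2 ^ Fintype.card Ω - 1) ≤ K * (2 ^ Fintype.card Ω - 1) :=
    Nat.mul_le_mul_right _ (Nat.sub_le K 1)
  have h7 : 2 ^ Fintype.card Ω ≤ 2 ^ Fintype.card Ω - 1 :=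
    Nat.le_of_mul_le_mul_left (le_trans h5 h6) (by omega)
  omega
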